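/- arXiv:0807.1598 — 3 statements merged into one kernel-verified Lean document; each statement's English description precedes it below -/
import Mathlib

section
/- For a convex function f : ℝⁿ → ℝ and integer 0 ≤ k ≤ n, the set Σ_k(f) = {x ∈ ℝⁿ : dim ∂f(x) ≥ k} has Hausdorff dimension at most n - k. -/
open Module
open scoped ENNReal

open Set
open scoped RealInnerProductSpace

namespace Stmt4Aux


/-- coordinate projection -/
def proj (n : ℕ) (S : Finset (Fin n)) : EuclideanSpace ℝ (Fin n) →ₗ[ℝ] (↥S → ℝ) where
  toFun v i := v i.1
  map_add' _ _ := rfl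
  map_smul' _ _ := rfl

lemma proj_surj (n : ℕ) (S : Finset (Fin n)) : Function.Surjective (proj n S) := by
  intro z
  refine ⟨(WithLp.equiv 2 _).symm (fun j => if h : j ∈ S then z ⟨j, h⟩ else 0), funext fun i => ?_⟩
  show (if h : i.1 ∈ S then z ⟨i.1, h⟩ else 0) = z i
  simp [i.2]

lemma exists_coord_finset (n k : ℕ) (W : Submodule ℝ (EuclideanSpace ℝ (Fin n)))
    (hk : k ≤ finrank ℝ W) :
    ∃ S : Finset (Fin n), k ≤ S.card ∧
      ∀ z : Fin n → ℝ, ∃ w ∈ W, ∀ i ∈ S, w i = z i := by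
  classical
  set E := EuclideanSpace ℝ (Fin n)
  set e : Fin n → E := fun i => EuclideanSpace.single i (1:ℝ) with he
  have hespan : Submodule.span ℝ (range e) = ⊤ := by
    have h := (EuclideanSpace.basisFun (Fin n) ℝ).toBasis.span_eq
    have h2 : range ⇑(EuclideanSpace.basisFun (Fin n) ℝ).toBasis = range e := by
      apply (Set.range_eq_iff _ _).2
      constructor
      · intro i
        rw [OrthonormalBasis.coe_toBasis, EuclideanSpace.basisFun_apply]
        exact ⟨i, rfl⟩
      · rintro v ⟨i, rfl⟩
        refine ⟨i, ?_⟩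
        rw [OrthonormalBasis.coe_toBasis, EuclideanSpace.basisFun_apply]
    rw [← h2]; exact h
  have heinj : Function.Injective e := by
    intro i j hij
    by_contra hne
    have h1 : (e i) i = (e j) i := congrArg (fun v : E => v i) hij
    rw [he] at h1
    simp only [EuclideanSpace.single_apply, if_pos rfl] at h1
    rw [if_neg hne] at h1
    exact one_ne_zero h1
  obtain ⟨s, hsW, hspan, hsli⟩ := exists_linearIndependent ℝ (W : Set E)
  rw [Submodule.span_eq] at hspan
  have hst : s ⊆ s ∪ range e := subset_union_left
  set b := (show LinearIndepOn ℝ id s from hsli).extend hst with hb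
  have hsb : s ⊆ b := (show LinearIndepOn ℝ id s from hsli).subset_extend hst
  have hbse : b ⊆ s ∪ range e := (show LinearIndepOn ℝ id s from hsli).extend_subset hst
  have hbli : LinearIndependent ℝ ((↑) : b → E) := (show LinearIndepOn ℝ id s from hsli).linearIndepOn_extend hst
  have hbspan : Submodule.span ℝ b = ⊤ := by
    refine le_antisymm le_top ?_
    calc (⊤ : Submodule ℝ E) = Submodule.span ℝ (range e) := hespan.symm
    _ ≤ Submodule.span ℝ (s ∪ range e) := Submodule.span_mono subset_union_right
    _ ≤ Submodule.span ℝ b := Submodule.span_le.2 ((show LinearIndepOn ℝ id s from hsli).subset_span_extend hst)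
  have hbfin : b.Finite := hbli.setFinite
  have hsfin : s.Finite := hbfin.subset hsb
  haveI : Fintype b := hbfin.fintype
  haveI : Fintype s := hsfin.fintype
  have hscard : s.toFinset.card = finrank ℝ W := by
    rw [← finrank_span_set_eq_card hsli, hspan]
  have hbcard : b.toFinset.card = n := by
    have h := finrank_span_set_eq_card hbli
    rw [hbspan, finrank_top] at h
    rw [← h]
    exact finrank_euclideanSpace_fin
  set S : Finset (Fin n) := Finset.univ.filter (fun i => e i ∉ b \ s) with hS
  have hcardS : k ≤ S.card := by
    have h1 : (Finset.univ.filter (fun i => e i ∈ b \ s)).card ≤ (b \ s).toFinset.card := by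
      refine Finset.card_le_card_of_injOn e ?_ (fun a _ b _ h => heinj h)
      intro i hi
      simp only [Finset.coe_filter, Finset.mem_univ, true_and, Set.mem_setOf_eq] at hi
      rw [Finset.mem_coe, Set.mem_toFinset]
      exact hi
    have h2 : (b \ s).toFinset.card = n - finrank ℝ W := by
      rw [Set.toFinset_diff, Finset.card_sdiff_of_subset (by simpa using Set.toFinset_mono hsb)]
      rw [hbcard, hscard]
    have h3 : S.card = n - (Finset.univ.filter (fun i => e i ∈ b \ s)).card := by
      rw [hS, Finset.filter_not, Finset.card_sdiff_of_subset (Finset.filter_subset _ _),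
        Finset.card_univ, Fintype.card_fin]
    have h4 : (Finset.univ.filter (fun i => e i ∈ b \ s)).card ≤ n := by
      refine le_trans (Finset.card_le_card (Finset.filter_subset _ _)) ?_
      simp
    have hWn : finrank ℝ W ≤ n :=
      le_trans (Submodule.finrank_le W) (le_of_eq finrank_euclideanSpace_fin)
    omega
  refine ⟨S, hcardS, fun z => ?_⟩
  set y : E := (WithLp.equiv 2 _).symm (fun j => if j ∈ S then z j else 0) with hy
  have hsup : W ⊔ Submodule.span ℝ (b \ s) = ⊤ := by
    rw [← hspan, ← Submodule.span_union, Set.union_diff_cancel hsb, hbspan]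
  have hymem : y ∈ W ⊔ Submodule.span ℝ (b \ s) := by rw [hsup]; trivial
  obtain ⟨w, hw, u, hu, hwu⟩ := Submodule.mem_sup.1 hymem
  set K : Submodule ℝ E :=
    { carrier := {v | ∀ i ∈ S, v i = 0}
      add_mem' := fun ha hb i hi => by rw [PiLp.add_apply, ha i hi, hb i hi, add_zero]
      zero_mem' := fun i hi => rfl
      smul_mem' := fun c a ha i hi => by rw [PiLp.smul_apply, ha i hi, smul_zero] } with hK
  have huK : u ∈ K := by
    refine Submodule.span_le.2 ?_ hu
    intro v hv
    have hvb : v ∈ b := hv.1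
    have hvs : v ∉ s := hv.2
    have hvre : v ∈ range e := (hbse hvb).resolve_left hvs
    obtain ⟨j, rfl⟩ := hvre
    have hjS : j ∉ S := by
      simp only [hS, Finset.mem_filter, Finset.mem_univ, true_and, not_not]
      exact hv
    intro i hi
    have hij : i ≠ j := fun h => hjS (h ▸ hi)
    rw [he]
    simp only [EuclideanSpace.single_apply, if_neg hij]
  refine ⟨w, hw, fun i hi => ?_⟩
  have h1 : w i + u i = y i := by rw [← hwu]; rfl
  have h2 : y i = z i := by
    rw [hy, WithLp.equiv_symm_apply, PiLp.toLp_apply, if_pos hi]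
  have h3 := huK i hi
  linarith



variable {n : ℕ}

/-- The subdifferential of `f` at `x`. -/
def SD (n : ℕ) (f : EuclideanSpace ℝ (Fin n) → ℝ) (x : EuclideanSpace ℝ (Fin n)) :
    Set (EuclideanSpace ℝ (Fin n) →L[ℝ] ℝ) :=
  {ℓ | ∀ y, f x + ℓ (y - x) ≤ f y}

/-- Riesz representation. -/
noncomputable def Td (n : ℕ) (ℓ : EuclideanSpace ℝ (Fin n) →L[ℝ] ℝ) : EuclideanSpace ℝ (Fin n) :=
  (InnerProductSpace.toDual ℝ (EuclideanSpace ℝ (Fin n))).symm ℓ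

lemma Td_inner (ℓ : EuclideanSpace ℝ (Fin n) →L[ℝ] ℝ) (v : EuclideanSpace ℝ (Fin n)) :
    ⟪Td n ℓ, v⟫ = ℓ v :=
  InnerProductSpace.toDual_symm_apply

lemma sd_convex (f : EuclideanSpace ℝ (Fin n) → ℝ) (x : EuclideanSpace ℝ (Fin n)) :
    Convex ℝ (SD n f x) := by
  intro ℓ₁ h₁ ℓ₂ h₂ a b ha hb hab y
  have e1 : (a • ℓ₁ + b • ℓ₂) (y - x) = a * ℓ₁ (y - x) + b * ℓ₂ (y - x) := by
    simp [ContinuousLinearMap.add_apply, ContinuousLinearMap.coe_smul', smul_eq_mul]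
  have t1 := mul_le_mul_of_nonneg_left (h₁ y) ha
  have t2 := mul_le_mul_of_nonneg_left (h₂ y) hb
  have e2 : a * f x + b * f x = f x := by rw [← add_mul, hab, one_mul]
  have e3 : a * f y + b * f y = f y := by rw [← add_mul, hab, one_mul]
  show f x + (a • ℓ₁ + b • ℓ₂) (y - x) ≤ f y
  rw [e1]
  linarith

lemma key_dist (f : EuclideanSpace ℝ (Fin n) → ℝ) {x₁ x₂ : EuclideanSpace ℝ (Fin n)}
    {ℓ₁ ℓ₂ : EuclideanSpace ℝ (Fin n) →L[ℝ] ℝ} (h₁ : ℓ₁ ∈ SD n f x₁) (h₂ : ℓ₂ ∈ SD n f x₂) :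
    ‖x₁ - x₂‖ ≤ ‖(x₁ + Td n ℓ₁) - (x₂ + Td n ℓ₂)‖ := by
  have hin : (0:ℝ) ≤ ⟪Td n ℓ₁ - Td n ℓ₂, x₁ - x₂⟫ := by
    rw [inner_sub_left, Td_inner, Td_inner]
    have e1 : ℓ₁ (x₂ - x₁) = -(ℓ₁ (x₁ - x₂)) := by rw [← map_neg]; congr 1; abel
    have e2 := h₁ x₂
    have e3 := h₂ x₁
    rw [e1] at e2
    linarith
  have hsq : ‖x₁ - x₂‖ ^ 2 ≤ ‖(x₁ - x₂) + (Td n ℓ₁ - Td n ℓ₂)‖ ^ 2 := by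
    rw [norm_add_sq_real]
    have := real_inner_comm (x₁ - x₂) (Td n ℓ₁ - Td n ℓ₂)
    nlinarith [sq_nonneg ‖Td n ℓ₁ - Td n ℓ₂‖]
  have he : (x₁ + Td n ℓ₁) - (x₂ + Td n ℓ₂) = (x₁ - x₂) + (Td n ℓ₁ - Td n ℓ₂) := by abel
  rw [he]
  nlinarith [norm_nonneg ((x₁ - x₂) + (Td n ℓ₁ - Td n ℓ₂)), norm_nonneg (x₁ - x₂)]

/-- Domain of the "proximal" map. -/
def Dom (n : ℕ) (f : EuclideanSpace ℝ (Fin n) → ℝ) : Set (EuclideanSpace ℝ (Fin n)) :=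
  {y | ∃ x, ∃ ℓ ∈ SD n f x, y = x + Td n ℓ}

open Classical in
noncomputable def P (n : ℕ) (f : EuclideanSpace ℝ (Fin n) → ℝ) :
    EuclideanSpace ℝ (Fin n) → EuclideanSpace ℝ (Fin n) := fun y =>
  if h : y ∈ Dom n f then h.choose else 0

lemma P_spec (f : EuclideanSpace ℝ (Fin n) → ℝ) {y : EuclideanSpace ℝ (Fin n)}
    (hy : y ∈ Dom n f) : ∃ ℓ ∈ SD n f (P n f y), y = P n f y + Td n ℓ := by
  rw [P, dif_pos hy]
  exact hy.choose_spec

lemma P_fixed (f : EuclideanSpace ℝ (Fin n) → ℝ) {x : EuclideanSpace ℝ (Fin n)}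
    {ℓ : EuclideanSpace ℝ (Fin n) →L[ℝ] ℝ} (hℓ : ℓ ∈ SD n f x) :
    P n f (x + Td n ℓ) = x := by
  have hy : x + Td n ℓ ∈ Dom n f := ⟨x, ℓ, hℓ, rfl⟩
  obtain ⟨ℓ', hℓ', he⟩ := P_spec f hy
  have hd := key_dist f hℓ' hℓ
  rw [← he, sub_self, norm_zero] at hd
  have := norm_le_zero_iff.1 hd
  rw [sub_eq_zero] at this
  exact this

lemma P_lip (f : EuclideanSpace ℝ (Fin n) → ℝ) : LipschitzOnWith 1 (P n f) (Dom n f) := by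
  refine LipschitzOnWith.of_dist_le_mul fun y₁ h₁ y₂ h₂ => ?_
  obtain ⟨ℓ₁, hℓ₁, he₁⟩ := P_spec f h₁
  obtain ⟨ℓ₂, hℓ₂, he₂⟩ := P_spec f h₂
  have := key_dist f hℓ₁ hℓ₂
  rw [← he₁, ← he₂] at this
  simpa [dist_eq_norm] using this

lemma finrank_ker_proj (n : ℕ) (S : Finset (Fin n)) :
    finrank ℝ (LinearMap.ker (proj n S)) = n - S.card := by
  have h := LinearMap.finrank_range_add_finrank_ker (proj n S)
  rw [finrank_euclideanSpace_fin] at h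
  have hr : LinearMap.range (proj n S) = ⊤ := LinearMap.range_eq_top.2 (proj_surj n S)
  rw [hr, finrank_top, finrank_fintype_fun_eq_card, Fintype.card_coe] at h
  omega

lemma dimH_plane_le (n : ℕ) (S : Finset (Fin n)) (q : Fin n → ℚ) :
    dimH {y : EuclideanSpace ℝ (Fin n) | ∀ i ∈ S, y i = (q i : ℝ)}
      ≤ ((n - S.card : ℕ) : ℝ≥0∞) := by
  classical
  set E := EuclideanSpace ℝ (Fin n)
  set V : Submodule ℝ E := LinearMap.ker (proj n S) with hV
  set c₀ : E := (WithLp.equiv 2 _).symm (fun j => if j ∈ S then (q j : ℝ) else 0) with hc₀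
  have hsub : {y : E | ∀ i ∈ S, y i = (q i : ℝ)} ⊆ (fun v => c₀ + v) '' (V : Set E) := by
    intro y hy
    refine ⟨y - c₀, ?_, by module⟩
    rw [SetLike.mem_coe, LinearMap.mem_ker]
    funext i
    show (y - c₀) i.1 = 0
    rw [PiLp.sub_apply, hy i.1 i.2, hc₀, WithLp.equiv_symm_apply, PiLp.toLp_apply, if_pos i.2, sub_self]
  refine le_trans (dimH_mono hsub) ?_
  have hiso : Isometry (fun v : E => c₀ + v) := fun a b => by
    simp [edist_add_left]
  rw [hiso.dimH_image]
  have h2 : (V : Set E) = Subtype.val '' (univ : Set ↥V) := by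
    rw [image_univ, Subtype.range_coe]
  rw [h2, (isometry_subtype_coe).dimH_image, Real.dimH_univ_eq_finrank, finrank_ker_proj]

lemma exists_rat_plane_point (n k : ℕ) (C : Set (EuclideanSpace ℝ (Fin n))) (hC : Convex ℝ C)
    (hne : C.Nonempty) (hk : k ≤ finrank ℝ (affineSpan ℝ C).direction) :
    ∃ S : Finset (Fin n), k ≤ S.card ∧ ∃ q : Fin n → ℚ,
      ∃ c ∈ C, ∀ i ∈ S, c i = (q i : ℝ) := by
  classical
  obtain ⟨S, hcard, hsurj⟩ := exists_coord_finset n k (affineSpan ℝ C).direction hk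
  refine ⟨S, hcard, ?_⟩
  set π := proj n S with hπ
  -- image of C is convex, nonempty, full-dimensional in ↥S → ℝ
  have hDconv : Convex ℝ (⇑π '' C) := hC.linear_image π
  have hDne : (⇑π '' C).Nonempty := hne.image _
  have hmap : Submodule.map π (affineSpan ℝ C).direction = ⊤ := by
    rw [Submodule.eq_top_iff']
    intro z
    obtain ⟨w, hw, hwz⟩ := hsurj (fun j => if h : j ∈ S then z ⟨j, h⟩ else 0)
    refine ⟨w, hw, ?_⟩
    funext i
    show w i.1 = z i
    rw [hwz i.1 i.2, dif_pos i.2]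
  have hspan : affineSpan ℝ (⇑π '' C) = ⊤ := by
    have h1 : affineSpan ℝ (⇑π.toAffineMap '' C) = (affineSpan ℝ C).map π.toAffineMap :=
      (AffineSubspace.map_span π.toAffineMap C).symm
    rw [LinearMap.coe_toAffineMap] at h1
    have h2 : ((affineSpan ℝ C).map π.toAffineMap).direction = ⊤ := by
      rw [AffineSubspace.map_direction]
      simpa using hmap
    rw [h1, ← AffineSubspace.direction_eq_top_iff_of_nonempty
      (by rw [← h1]; exact hDne.mono (subset_affineSpan ℝ _))]
    exact h2
  obtain ⟨x, hx⟩ := (hDconv.interior_nonempty_iff_affineSpan_eq_top).2 hspan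
  obtain ⟨ε, hε, hball⟩ := Metric.isOpen_iff.1 isOpen_interior x hx
  choose qs hqs using fun i : ↥S => exists_rat_near (x i) hε
  set z : ↥S → ℝ := fun i => (qs i : ℝ) with hz
  have hzball : z ∈ Metric.ball x ε := by
    rw [Metric.mem_ball, dist_comm]
    rw [dist_pi_lt_iff hε]
    intro i
    rw [Real.dist_eq]
    exact hqs i
  have hzD : z ∈ ⇑π '' C := interior_subset (hball hzball)
  obtain ⟨c, hcC, hcz⟩ := hzD
  refine ⟨fun j => if h : j ∈ S then qs ⟨j, h⟩ else 0, c, hcC, fun i hi => ?_⟩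
  have : π c ⟨i, hi⟩ = z ⟨i, hi⟩ := by rw [hcz]
  simp only [dif_pos hi]
  exact this

/-- Riesz representation as a linear equivalence. -/
noncomputable def TdE (n : ℕ) :
    (EuclideanSpace ℝ (Fin n) →L[ℝ] ℝ) ≃ₗ[ℝ] EuclideanSpace ℝ (Fin n) where
  toFun := Td n
  invFun v := InnerProductSpace.toDual ℝ _ v
  map_add' a b := by simp [Td, map_add]
  map_smul' c a := by simp [Td, map_smulₛₗ]
  left_inv a := by simp [Td]
  right_inv v := by simp [Td]

/-- The affine map `ℓ ↦ x + Td ℓ`. -/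
noncomputable def phi (n : ℕ) (x : EuclideanSpace ℝ (Fin n)) :
    (EuclideanSpace ℝ (Fin n) →L[ℝ] ℝ) →ᵃ[ℝ] EuclideanSpace ℝ (Fin n) where
  toFun ℓ := x + Td n ℓ
  linear := (TdE n : (EuclideanSpace ℝ (Fin n) →L[ℝ] ℝ) →ₗ[ℝ] EuclideanSpace ℝ (Fin n))
  map_vadd' p v := by
    show x + Td n (v + p) = Td n v +ᵥ (x + Td n p)
    rw [vadd_eq_add, Td, Td, Td, map_add]
    abel

set_option maxHeartbeats 1000000 in
lemma finrank_affimg (n : ℕ) (x : EuclideanSpace ℝ (Fin n))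
    (s : Set (EuclideanSpace ℝ (Fin n) →L[ℝ] ℝ)) :
    finrank ℝ (affineSpan ℝ (⇑(phi n x) '' s)).direction
      = finrank ℝ (affineSpan ℝ s).direction := by
  rw [← AffineSubspace.map_span, AffineSubspace.map_direction]
  exact LinearEquiv.finrank_map_eq (TdE n) _


end Stmt4Aux

set_option maxHeartbeats 1000000 in
/-- For a convex `f : ℝⁿ → ℝ` and `0 ≤ k ≤ n`, the set of points where the
subdifferential of `f` has dimension at least `k` has Hausdorff dimension
at most `n - k`. -/
theorem stmt4 (n k : ℕ) (hk : k ≤ n) (f : EuclideanSpace ℝ (Fin n) → ℝ)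
    (hf : ConvexOn ℝ Set.univ f) :
    dimH {x : EuclideanSpace ℝ (Fin n) |
        k ≤ finrank ℝ (affineSpan ℝ
          {ℓ : EuclideanSpace ℝ (Fin n) →L[ℝ] ℝ | ∀ y, f x + ℓ (y - x) ≤ f y}).direction}
      ≤ ((n - k : ℕ) : ℝ≥0∞) := by
  classical
  rcases Nat.eq_zero_or_pos k with rfl | hk1
  · refine le_trans (dimH_mono (subset_univ _)) ?_
    rw [Real.dimH_univ_eq_finrank, finrank_euclideanSpace_fin]
    simp
  · have hcover : {x : EuclideanSpace ℝ (Fin n) |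
        k ≤ finrank ℝ (affineSpan ℝ
          {ℓ : EuclideanSpace ℝ (Fin n) →L[ℝ] ℝ | ∀ y, f x + ℓ (y - x) ≤ f y}).direction} ⊆
        ⋃ p : Finset (Fin n) × (Fin n → ℚ),
          (if k ≤ p.1.card then
            Stmt4Aux.P n f '' (Stmt4Aux.Dom n f ∩ {y | ∀ i ∈ p.1, y i = (p.2 i : ℝ)}) else ∅) := by
      intro x hx
      have hxSD : k ≤ finrank ℝ (affineSpan ℝ (Stmt4Aux.SD n f x)).direction := hx
      have hCk : k ≤ finrank ℝ (affineSpan ℝ (⇑(Stmt4Aux.phi n x) '' Stmt4Aux.SD n f x)).direction := by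
        rw [Stmt4Aux.finrank_affimg]; exact hxSD
      have hSDne : (Stmt4Aux.SD n f x).Nonempty := by
        by_contra hemp
        rw [not_nonempty_iff_eq_empty] at hemp
        rw [hemp, AffineSubspace.span_empty] at hxSD
        rw [AffineSubspace.direction_bot, finrank_bot] at hxSD
        omega
      obtain ⟨S, hcard, q, c, hcC, hcq⟩ := Stmt4Aux.exists_rat_plane_point n k _
        (Convex.affine_image (Stmt4Aux.phi n x) (Stmt4Aux.sd_convex f x)) (hSDne.image _) hCk
      obtain ⟨ℓ, hℓ, rfl⟩ := hcC
      refine mem_iUnion.2 ⟨(S, q), ?_⟩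
      show _ ∈ (if k ≤ S.card then
        Stmt4Aux.P n f '' (Stmt4Aux.Dom n f ∩ {y | ∀ i ∈ S, y i = (q i : ℝ)}) else ∅)
      rw [if_pos hcard]
      refine ⟨x + Stmt4Aux.Td n ℓ, ⟨⟨x, ℓ, hℓ, rfl⟩, fun i hi => ?_⟩, Stmt4Aux.P_fixed f hℓ⟩
      exact hcq i hi
    refine le_trans (dimH_mono hcover) ?_
    rw [dimH_iUnion]
    refine iSup_le fun p => ?_
    by_cases hc : k ≤ p.1.card
    · rw [if_pos hc]
      calc dimH (Stmt4Aux.P n f '' (Stmt4Aux.Dom n f ∩ {y | ∀ i ∈ p.1, y i = (p.2 i : ℝ)}))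
          ≤ dimH (Stmt4Aux.Dom n f ∩ {y | ∀ i ∈ p.1, y i = (p.2 i : ℝ)}) :=
            ((Stmt4Aux.P_lip f).mono inter_subset_left).dimH_image_le
        _ ≤ dimH {y : EuclideanSpace ℝ (Fin n) | ∀ i ∈ p.1, y i = (p.2 i : ℝ)} :=
            dimH_mono inter_subset_right
        _ ≤ ((n - p.1.card : ℕ) : ℝ≥0∞) := Stmt4Aux.dimH_plane_le n p.1 p.2
        _ ≤ ((n - k : ℕ) : ℝ≥0∞) := Nat.cast_le.2 (Nat.sub_le_sub_left hc n)
    · rw [if_neg hc]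
      simp
end

section
/- The set A_k = {x ∈ ℝⁿ : at least k coordinates of x are rational} has Hausdorff dimension n - k, and A_k intersects every convex subset of ℝⁿ of dimension at least k. -/
open Module Set
open scoped ENNReal

noncomputable def fillMap (n : ℕ) (s : Finset (Fin n)) (q : Fin n → ℝ) :
    EuclideanSpace ℝ {i : Fin n // i ∉ s} → EuclideanSpace ℝ (Fin n) :=
  fun y => WithLp.toLp 2 (fun i => if h : i ∈ s then q i else y ⟨i, h⟩)

lemma fillMap_isometry (n : ℕ) (s : Finset (Fin n)) (q : Fin n → ℝ) :
    Isometry (fillMap n s q) := by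
  intro y z
  rw [EuclideanSpace.edist_eq, EuclideanSpace.edist_eq]
  congr 1
  calc ∑ i : Fin n, edist (fillMap n s q y i) (fillMap n s q z i) ^ 2
      = ∑ i ∈ sᶜ, edist (fillMap n s q y i) (fillMap n s q z i) ^ 2 := by
        refine (Finset.sum_subset sᶜ.subset_univ fun i _ hi => ?_).symm
        simp only [Finset.mem_compl, not_not] at hi
        simp [fillMap, hi]
    _ = ∑ i : {i : Fin n // i ∉ s}, edist (fillMap n s q y i.1) (fillMap n s q z i.1) ^ 2 :=
        Finset.sum_subtype _ (by simp) _
    _ = ∑ i : {i : Fin n // i ∉ s}, edist (y i) (z i) ^ 2 := by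
        refine Finset.sum_congr rfl fun i _ => ?_
        simp [fillMap, i.2]

lemma fillMap_range (n : ℕ) (s : Finset (Fin n)) (q : Fin n → ℝ) :
    Set.range (fillMap n s q) = {x : EuclideanSpace ℝ (Fin n) | ∀ i ∈ s, x i = q i} := by
  ext x
  constructor
  · rintro ⟨y, rfl⟩ i hi
    simp [fillMap, hi]
  · intro hx
    refine ⟨WithLp.toLp 2 (fun j => x j.1), ?_⟩
    ext i
    by_cases h : i ∈ s <;> simp [fillMap, h, hx i]

lemma dimH_slice (n : ℕ) (s : Finset (Fin n)) (q : Fin n → ℝ) :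
    dimH {x : EuclideanSpace ℝ (Fin n) | ∀ i ∈ s, x i = q i}
      = ((n - s.card : ℕ) : ℝ≥0∞) := by
  rw [← fillMap_range, ← Set.image_univ, (fillMap_isometry n s q).dimH_image,
    Real.dimH_univ_eq_finrank]
  congr 1
  simp [finrank_euclideanSpace, Fintype.card_subtype_compl]

lemma proj_surj (k : ℕ) (n : ℕ) (D : Submodule ℝ (EuclideanSpace ℝ (Fin n)))
    (hD : k ≤ finrank ℝ D) :
    ∃ s : Finset (Fin n), s.card = k ∧
      ∀ w : {i : Fin n // i ∈ s} → ℝ, ∃ v ∈ D, ∀ i : {i : Fin n // i ∈ s}, v i.1 = w i := by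
  induction k generalizing D with
  | zero =>
    exact ⟨∅, rfl, fun w => ⟨0, D.zero_mem, fun i => absurd i.2 (Finset.notMem_empty _)⟩⟩
  | succ k ih =>
    -- D is nontrivial
    have hpos : 0 < finrank ℝ D := lt_of_lt_of_le (Nat.succ_pos k) hD
    obtain ⟨v, hvD, hv0⟩ := (Submodule.ne_bot_iff D).1 (by
      intro h; rw [h] at hpos; simp at hpos)
    have : ∃ i₀ : Fin n, v i₀ ≠ 0 := by
      by_contra h
      push_neg at h
      exact hv0 (WithLp.ofLp_injective 2 (funext h))
    obtain ⟨i₀, hi₀⟩ := this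
    set φ : EuclideanSpace ℝ (Fin n) →ₗ[ℝ] ℝ := EuclideanSpace.projₗ i₀ with hφ
    set D' : Submodule ℝ (EuclideanSpace ℝ (Fin n)) := D ⊓ LinearMap.ker φ with hD'
    have hrank : k ≤ finrank ℝ D' := by
      have h1 : finrank ℝ ↥(D ⊔ LinearMap.ker φ) ≤ n := by
        refine (Submodule.finrank_le _).trans_eq ?_
        simp [finrank_euclideanSpace]
      have h2 : finrank ℝ (LinearMap.range φ) ≤ 1 := by
        refine (Submodule.finrank_le _).trans_eq ?_
        simp
      have h3 : finrank ℝ (LinearMap.range φ) + finrank ℝ (LinearMap.ker φ) = n := by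
        rw [LinearMap.finrank_range_add_finrank_ker φ]
        simp [finrank_euclideanSpace]
      have h4 := Submodule.finrank_sup_add_finrank_inf_eq D (LinearMap.ker φ)
      have h5 : finrank ℝ ↥D' = finrank ℝ ↥(D ⊓ LinearMap.ker φ) := by rw [hD']
      omega
    obtain ⟨s', hs'c, hs'⟩ := ih D' hrank
    have hi₀s' : i₀ ∉ s' := by
      intro hmem
      obtain ⟨z, hz, hz'⟩ := hs' (fun _ => 1)
      have h1 : z i₀ = 1 := hz' ⟨i₀, hmem⟩
      have h2 : z i₀ = 0 := by
        have := hz.2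
        simpa [hφ] using this
      rw [h1] at h2; exact one_ne_zero h2
    refine ⟨insert i₀ s', by rw [Finset.card_insert_of_notMem hi₀s', hs'c], fun w => ?_⟩
    set u : EuclideanSpace ℝ (Fin n) := (w ⟨i₀, Finset.mem_insert_self _ _⟩ / v i₀) • v with hu
    obtain ⟨z, hzD', hz⟩ := hs' (fun i => w ⟨i.1, Finset.mem_insert_of_mem i.2⟩ - u i.1)
    refine ⟨u + z, D.add_mem (D.smul_mem _ hvD) hzD'.1, fun i => ?_⟩
    rcases Finset.mem_insert.1 i.2 with h | h
    · have hz0 : z i₀ = 0 := by simpa [hφ] using hzD'.2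
      have hu0 : u i₀ = w ⟨i₀, Finset.mem_insert_self _ _⟩ := by
        simp only [hu, PiLp.smul_apply, smul_eq_mul]
        field_simp
      have hi : i = ⟨i₀, Finset.mem_insert_self _ _⟩ := Subtype.ext h
      rw [hi]
      show u i₀ + z i₀ = _
      rw [hz0, hu0, add_zero]
    · have hzi := hz ⟨i.1, h⟩
      have hii : (⟨i.1, Finset.mem_insert_of_mem h⟩ : {j : Fin n // j ∈ insert i₀ s'}) = i :=
        Subtype.ext rfl
      show u i.1 + z i.1 = w i
      rw [hzi, hii]
      ring

lemma part1 (n k : ℕ) (hk : k ≤ n) :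
    dimH {x : EuclideanSpace ℝ (Fin n) |
        ∃ s : Finset (Fin n), k ≤ s.card ∧ ∀ i ∈ s, ∃ q : ℚ, x i = (q : ℝ)}
      = ((n - k : ℕ) : ℝ≥0∞) := by
  obtain ⟨s₀, -, hs₀⟩ := Finset.exists_subset_card_eq (by simpa using hk :
    k ≤ (Finset.univ : Finset (Fin n)).card)
  apply le_antisymm
  · have hsub : {x : EuclideanSpace ℝ (Fin n) |
        ∃ s : Finset (Fin n), k ≤ s.card ∧ ∀ i ∈ s, ∃ q : ℚ, x i = (q : ℝ)} ⊆
        ⋃ p : {s : Finset (Fin n) // s.card = k} × (Fin n → ℚ),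
          {x : EuclideanSpace ℝ (Fin n) | ∀ i ∈ p.1.1, x i = ((p.2 i : ℚ) : ℝ)} := by
      rintro x ⟨s, hcard, hx⟩
      obtain ⟨t, hts, htc⟩ := Finset.exists_subset_card_eq hcard
      classical
      refine Set.mem_iUnion.2 ⟨⟨⟨t, htc⟩, fun i =>
        if h : ∃ q : ℚ, x i = (q : ℝ) then h.choose else 0⟩, fun i hi => ?_⟩
      have h := hx i (hts hi)
      simp only [h, dif_pos]
      exact h.choose_spec
    refine (dimH_mono hsub).trans ?_
    rw [dimH_iUnion]
    refine iSup_le fun p => ?_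
    rw [dimH_slice]
    simp [p.1.2]
  · have hsub : {x : EuclideanSpace ℝ (Fin n) | ∀ i ∈ s₀, x i = ((0 : Fin n → ℝ) i)} ⊆
        {x : EuclideanSpace ℝ (Fin n) |
        ∃ s : Finset (Fin n), k ≤ s.card ∧ ∀ i ∈ s, ∃ q : ℚ, x i = (q : ℝ)} := by
      intro x hx
      exact ⟨s₀, hs₀.ge, fun i hi => ⟨0, by simpa using hx i hi⟩⟩
    have := dimH_mono hsub
    rwa [dimH_slice, hs₀] at this

lemma part2 (n k : ℕ) (C : Set (EuclideanSpace ℝ (Fin n))) (hne : C.Nonempty)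
    (hconv : Convex ℝ C) (hdim : k ≤ finrank ℝ (affineSpan ℝ C).direction) :
    ({x : EuclideanSpace ℝ (Fin n) |
        ∃ s : Finset (Fin n), k ≤ s.card ∧ ∀ i ∈ s, ∃ q : ℚ, x i = (q : ℝ)} ∩ C).Nonempty := by
  obtain ⟨s, hsc, hsurj⟩ := proj_surj k n (affineSpan ℝ C).direction hdim
  set P : EuclideanSpace ℝ (Fin n) →ₗ[ℝ] ({i : Fin n // i ∈ s} → ℝ) :=
    LinearMap.pi (fun i => EuclideanSpace.projₗ i.1) with hP
  -- the image of C under P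
  have hconv' : Convex ℝ (P '' C) := hconv.linear_image P
  have hspan : affineSpan ℝ (P '' C) = ⊤ := by
    rw [show (⇑P '' C) = (⇑P.toAffineMap '' C) from rfl, ← AffineSubspace.map_span]
    have hne' : (((affineSpan ℝ C).map P.toAffineMap :
        AffineSubspace ℝ ({i : Fin n // i ∈ s} → ℝ)) :
        Set ({i : Fin n // i ∈ s} → ℝ)).Nonempty := by
      obtain ⟨x, hx⟩ := hne
      exact ⟨P x, AffineSubspace.mem_map.2 ⟨x, subset_affineSpan ℝ C hx, rfl⟩⟩
    rw [← AffineSubspace.direction_eq_top_iff_of_nonempty hne',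
      AffineSubspace.map_direction]
    rw [Submodule.eq_top_iff']
    intro w
    obtain ⟨v, hv, hvw⟩ := hsurj w
    exact Submodule.mem_map.2 ⟨v, hv, funext fun i => hvw i⟩
  have hint : (interior (P '' C)).Nonempty :=
    hconv'.interior_nonempty_iff_affineSpan_eq_top.2 hspan
  have hdense : Dense (Set.univ.pi fun _ : {i : Fin n // i ∈ s} =>
      Set.range ((↑) : ℚ → ℝ)) :=
    dense_pi Set.univ (fun i _ => Rat.denseRange_cast)
  obtain ⟨y, hyQ, hyI⟩ := hdense.exists_mem_open isOpen_interior hint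
  obtain ⟨x, hxC, hxy⟩ := interior_subset hyI
  refine ⟨x, ⟨s, hsc.ge, fun i hi => ?_⟩, hxC⟩
  obtain ⟨q, hq⟩ := hyQ ⟨i, hi⟩ (mem_univ _)
  refine ⟨q, ?_⟩
  rw [hq]
  rw [← hxy]
  rfl


/-- The set `A_k` of points of `ℝⁿ` having at least `k` rational coordinates has
Hausdorff dimension `n - k`, and it meets every nonempty convex subset of `ℝⁿ`
of dimension at least `k`. -/
theorem stmt5 (n k : ℕ) (hk : k ≤ n) :
    dimH {x : EuclideanSpace ℝ (Fin n) |
        ∃ s : Finset (Fin n), k ≤ s.card ∧ ∀ i ∈ s, ∃ q : ℚ, x i = (q : ℝ)}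
      = ((n - k : ℕ) : ℝ≥0∞) ∧
    ∀ C : Set (EuclideanSpace ℝ (Fin n)), C.Nonempty → Convex ℝ C →
      k ≤ finrank ℝ (affineSpan ℝ C).direction →
      ({x : EuclideanSpace ℝ (Fin n) |
        ∃ s : Finset (Fin n), k ≤ s.card ∧ ∀ i ∈ s, ∃ q : ℚ, x i = (q : ℝ)} ∩ C).Nonempty := by
  exact ⟨part1 n k hk, fun C hne hconv hdim => part2 n k C hne hconv hdim⟩
end

section
/- Let E be a complete metrizable topological vector space (Fréchet space in the metric sense), A and D topological spaces with D compact, and suppose S : A × E → (compact subsets of a metric space K) is upper semi-continuous. Define O(D, ε, k) as the set of u ∈ E such that for every L ∈ D, S(L,u) is contained in the ε-neighborhood of some k-dimensional convex subset of K. Then O(D, ε, k) is open in E. -/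
open Module

/-- If `S : A × E → compact subsets of K` is upper semi-continuous, `D ⊆ A` is compact
and `E` is a completely metrizable topological vector space, then the set
`O(D, ε, k)` of `u ∈ E` such that for every `L ∈ D` the set `S (L, u)` lies in the
`ε`-neighborhood of some `k`-dimensional convex subset of `K`, is open in `E`. -/
theorem stmt15 (A : Type*) [TopologicalSpace A]
    (E : Type*) [UniformSpace E] [CompleteSpace E] [AddCommGroup E] [IsUniformAddGroup E]
      [Module ℝ E] [ContinuousSMul ℝ E] [TopologicalSpace.MetrizableSpace E]
    (K : Type*) [NormedAddCommGroup K] [NormedSpace ℝ K]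
    (S : A × E → Set K) (hScp : ∀ p, IsCompact (S p))
    (husc : ∀ U : Set K, IsOpen U → IsOpen {p : A × E | S p ⊆ U})
    (D : Set A) (hD : IsCompact D) (ε : ℝ) (hε : 0 < ε) (k : ℕ) :
    IsOpen {u : E | ∀ L ∈ D, ∃ V : Set K, Convex ℝ V ∧
      finrank ℝ (affineSpan ℝ V).direction ≤ k ∧
      S (L, u) ⊆ Metric.thickening ε V} := by
  rw [isOpen_iff_mem_nhds]
  intro u₀ hu₀
  choose! V hVconv hVrank hVsub using hu₀
  have key : ∀ L ∈ D, ∃ (W : Set A) (U : Set E), IsOpen W ∧ IsOpen U ∧ L ∈ W ∧ u₀ ∈ U ∧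
      ∀ L' ∈ W, ∀ u ∈ U, S (L', u) ⊆ Metric.thickening ε (V L) := by
    intro L hL
    have hopen := husc (Metric.thickening ε (V L)) Metric.isOpen_thickening
    rw [isOpen_prod_iff] at hopen
    obtain ⟨W, U, hW, hU, hLW, hu₀U, hsub⟩ := hopen L u₀ (hVsub L hL)
    exact ⟨W, U, hW, hU, hLW, hu₀U, fun L' hL' u hu => hsub (Set.mk_mem_prod hL' hu)⟩
  choose! W U hWopen hUopen hLW hu₀U hsub using key
  obtain ⟨t, htD, htfin, hcov⟩ := hD.elim_finite_subcover_image hWopen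
    (fun L hL => Set.mem_biUnion hL (hLW L hL))
  refine Filter.mem_of_superset
    ((htfin.isOpen_biInter (fun L hL => hUopen L (htD hL))).mem_nhds ?_) ?_
  · exact Set.mem_biInter (fun L hL => hu₀U L (htD hL))
  · intro u hu L' hL'
    obtain ⟨L, hLt, hL'W⟩ := Set.mem_iUnion₂.1 (hcov hL')
    exact ⟨V L, hVconv L (htD hLt), hVrank L (htD hLt),
      hsub L (htD hLt) L' hL'W u (Set.mem_iInter₂.1 hu L hLt)⟩
end
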